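/- Let C = (c_1,…,c_k) be a self-complementary integer string with k ≥ 2. Then c_1 = 2 or c_k = 2; moreover, if c_1 = 2 then the string (c_2,…,c_{k−1}, c_k − 1) is self-complementary, and if c_k = 2 then the string (c_1 − 1, c_2,…,c_{k−1}) is self-complementary. -/

import Mathlib

/-- A 2-final expansion of a pair of integer strings: it transforms
`((a₁,…,aₙ),(b₁,…,bₘ))` into either `((a₁+1,a₂,…,aₙ),(b₁,…,bₘ,2))` or
`((2,a₁,…,aₙ),(b₁,…,bₘ₋₁,bₘ+1))`. -/
def TwoFinalExp : List ℤ × List ℤ → List ℤ × List ℤ → Prop := fun P Q =>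
  (∃ (a : ℤ) (A B : List ℤ), P = (a :: A, B) ∧ Q = ((a + 1) :: A, B ++ [2])) ∨
  (∃ (A B : List ℤ) (b : ℤ), P = (A, B ++ [b]) ∧ Q = (2 :: A, B ++ [b + 1]))

/-- A pair of integer strings is complementary if it is obtained from the pair
`((2),(2))` by a finite (possibly empty) sequence of 2-final expansions. -/
def Complementary (A B : List ℤ) : Prop :=
  Relation.ReflTransGen TwoFinalExp ([2], [2]) (A, B)

/-- Increment the last entry of a list of integers. -/
def incLast : List ℤ → List ℤ
  | [] => []
  | [a] => [a + 1]
  | a :: b :: l => a :: incLast (b :: l)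

lemma incLast_cons_of_ne (a : ℤ) (l : List ℤ) (h : l ≠ []) :
    incLast (a :: l) = a :: incLast l := by
  cases l with
  | nil => exact absurd rfl h
  | cons b t => rfl

lemma incLast_append (l : List ℤ) (x : ℤ) : incLast (l ++ [x]) = l ++ [x + 1] := by
  induction l with
  | nil => rfl
  | cons a t ih =>
    have hne : t ++ [x] ≠ [] := by simp
    simp [incLast_cons_of_ne a (t ++ [x]) hne, ih]

/-- Any complementary pair consists of nonempty lists. -/
lemma compl_ne {A B : List ℤ} (h : Complementary A B) : A ≠ [] ∧ B ≠ [] := by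
  have : ∀ P : List ℤ × List ℤ,
      Relation.ReflTransGen TwoFinalExp ([2], [2]) P → P.1 ≠ [] ∧ P.2 ≠ [] := by
    intro P h
    induction h with
    | refl => simp
    | tail _ hstep _ =>
      rcases hstep with ⟨a, A', B', _, rfl⟩ | ⟨A', B', b, _, rfl⟩ <;> simp
  exact this (A, B) h

/-- The first entry of the first list of a complementary pair is at least 2. -/
lemma compl_head {A B : List ℤ} (h : Complementary A B) :
    ∃ x t, A = x :: t ∧ (2 : ℤ) ≤ x := by
  have : ∀ P : List ℤ × List ℤ,
      Relation.ReflTransGen TwoFinalExp ([2], [2]) P →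
      ∃ x t, P.1 = x :: t ∧ (2 : ℤ) ≤ x := by
    intro P h
    induction h with
    | refl => exact ⟨2, [], rfl, le_refl 2⟩
    | tail _ hstep ih =>
      rcases hstep with ⟨a, A', B', h1, rfl⟩ | ⟨A', B', b, h1, rfl⟩
      · obtain ⟨x, t, hxt, hx⟩ := ih
        rw [h1] at hxt
        have hax : a = x ∧ A' = t := by simpa using hxt
        obtain ⟨rfl, rfl⟩ := hax
        exact ⟨a + 1, A', rfl, by linarith⟩
      · exact ⟨2, A', rfl, le_refl 2⟩
  exact this (A, B) h

lemma twoFinalExp_rev {P Q : List ℤ × List ℤ} (h : TwoFinalExp P Q) :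
    TwoFinalExp (P.2.reverse, P.1.reverse) (Q.2.reverse, Q.1.reverse) := by
  rcases h with ⟨a, A, B, rfl, rfl⟩ | ⟨A, B, b, rfl, rfl⟩
  · right
    exact ⟨B.reverse, A.reverse, a, by simp, by simp⟩
  · left
    exact ⟨b, B.reverse, A.reverse, by simp, by simp⟩

lemma compl_rev {A B : List ℤ} (h : Complementary A B) :
    Complementary B.reverse A.reverse := by
  have := Relation.ReflTransGen.lift
    (f := fun P : List ℤ × List ℤ => (P.2.reverse, P.1.reverse))
    (fun a b hab => twoFinalExp_rev hab) _ _ h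
  simpa [Complementary, Function.onFun] using this

/-- Head of the second list is at least 3 for every pair reachable from `([2,2],[3])`. -/
lemma headB3 (P : List ℤ × List ℤ)
    (h : Relation.ReflTransGen TwoFinalExp (([2, 2], [3]) : List ℤ × List ℤ) P) :
    ∃ x t, P.2 = x :: t ∧ (3 : ℤ) ≤ x := by
  induction h with
  | refl => exact ⟨3, [], rfl, le_refl 3⟩
  | tail _ hstep ih =>
    rcases hstep with ⟨a, A', B', h1, rfl⟩ | ⟨A', B', b, h1, rfl⟩
    · obtain ⟨x, t, hxt, hx⟩ := ih
      rw [h1] at hxt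
      simp only at hxt
      exact ⟨x, t ++ [2], by simp [hxt], hx⟩
    · obtain ⟨x, t, hxt, hx⟩ := ih
      rw [h1] at hxt
      simp only at hxt
      cases B' with
      | nil =>
        simp at hxt
        exact ⟨b + 1, [], by simp [hxt.2], by linarith [hxt.1 ▸ hx]⟩
      | cons y T =>
        simp at hxt
        exact ⟨x, T ++ [b + 1], by simp [hxt.1, hxt.2], hx⟩

/-- Simulation: every pair reachable from `([3],[2,2])` is the image of a
complementary pair under `(A₀, B₀) ↦ (incLast A₀, 2 :: B₀)`. -/
lemma sim (P : List ℤ × List ℤ)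
    (h : Relation.ReflTransGen TwoFinalExp (([3], [2, 2]) : List ℤ × List ℤ) P) :
    ∃ A₀ B₀, Complementary A₀ B₀ ∧ P.1 = incLast A₀ ∧ P.2 = 2 :: B₀ := by
  induction h with
  | refl =>
    exact ⟨[2], [2], Relation.ReflTransGen.refl, rfl, rfl⟩
  | tail _ hstep ih =>
    obtain ⟨A₀, B₀, hc, hA, hB⟩ := ih
    obtain ⟨hA₀ne, hB₀ne⟩ := compl_ne hc
    rcases hstep with ⟨a, A', B', h1, rfl⟩ | ⟨A', B', b, h1, rfl⟩
    · -- type 1 move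
      rw [h1] at hA hB
      simp only at hA hB
      -- A₀ is nonempty; case on its shape
      cases A₀ with
      | nil => exact absurd rfl hA₀ne
      | cons x T =>
        cases T with
        | nil =>
          -- incLast [x] = [x+1] = a :: A'
          simp [incLast] at hA
          obtain ⟨hax, rfl⟩ := hA
          refine ⟨[x + 1], B₀ ++ [2], hc.tail ?_, ?_, ?_⟩
          · exact Or.inl ⟨x, [], B₀, rfl, rfl⟩
          · simp [incLast, hax]
          · simp [hB]
        | cons y T' =>
          rw [incLast_cons_of_ne x (y :: T') (by simp)] at hA
          simp only [List.cons.injEq] at hA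
          obtain ⟨rfl, rfl⟩ := hA
          refine ⟨(a + 1) :: y :: T', B₀ ++ [2], hc.tail ?_, ?_, ?_⟩
          · exact Or.inl ⟨a, y :: T', B₀, rfl, rfl⟩
          · rw [incLast_cons_of_ne (a + 1) (y :: T') (by simp)]
          · simp [hB]
    · -- type 2 move
      rw [h1] at hA hB
      simp only at hA hB
      -- B₀ is nonempty, write it as B₂ ++ [b₀]
      rcases List.eq_nil_or_concat B₀ with rfl | ⟨B₂, b₀, rfl⟩
      · exact absurd rfl hB₀ne
      · simp only [List.concat_eq_append] at hB hc ⊢ -- hB : B' ++ [b] = 2 :: (B₂ ++ [b₀]) = (2 :: B₂) ++ [b₀]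
        have hB' : B' ++ [b] = (2 :: B₂) ++ [b₀] := by simpa using hB
        obtain ⟨rfl, hb⟩ := List.append_inj' hB' rfl
        have hb' : b = b₀ := by simpa using hb
        subst hb'
        refine ⟨2 :: A₀, B₂ ++ [b + 1], hc.tail ?_, ?_, ?_⟩
        · exact Or.inr ⟨A₀, B₂, b, rfl, rfl⟩
        · rw [incLast_cons_of_ne 2 A₀ hA₀ne, hA]
        · simp
lemma key {A Y : List ℤ} (h : Complementary A (2 :: Y)) (hY : Y ≠ []) :
    ∃ A₀, Complementary A₀ Y ∧ A = incLast A₀ := by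
  rcases Relation.ReflTransGen.cases_head h with heq | ⟨c, hstep, hrest⟩
  · simp only [Prod.mk.injEq] at heq
    exact absurd heq.2.symm (by simp [hY])
  · rcases hstep with ⟨a, A', B', h1, rfl⟩ | ⟨A', B', b, h1, rfl⟩
    · -- first move is type 1: goes to ([3],[2,2])
      simp only [Prod.mk.injEq, List.cons.injEq] at h1
      obtain ⟨⟨rfl, rfl⟩, rfl⟩ := h1
      have h3 : Relation.ReflTransGen TwoFinalExp (([3], [2, 2]) : List ℤ × List ℤ)
          (A, 2 :: Y) := by
        convert hrest using 2 <;> norm_num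
      obtain ⟨A₀, B₀, hc, hA, hB⟩ := sim (A, 2 :: Y) h3
      simp only [List.cons.injEq] at hB
      exact ⟨A₀, hB.2 ▸ hc, hA⟩
    · -- first move is type 2: goes to ([2,2],[3]); impossible since head of B stays ≥ 3
      simp only [Prod.mk.injEq] at h1
      obtain ⟨rfl, h1⟩ := h1
      have hB' : B' = [] := by
        cases B' with
        | nil => rfl
        | cons x T =>
          exfalso
          have := congrArg List.length h1
          simp at this
      subst hB'
      simp only [List.nil_append, List.cons.injEq] at h1
      obtain ⟨rfl, -⟩ := h1
      have h3 : Relation.ReflTransGen TwoFinalExp (([2, 2], [3]) : List ℤ × List ℤ)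
          (A, 2 :: Y) := by
        convert hrest using 2 <;> norm_num
      obtain ⟨x, t, hxt, hx⟩ := headB3 (A, 2 :: Y) h3
      simp only [List.cons.injEq] at hxt
      omega

/-- The second conclusion as a standalone lemma. -/
lemma concl2 {C : List ℤ} (hC : Complementary C C) (mid : List ℤ) (ck : ℤ)
    (hdecomp : C = 2 :: (mid ++ [ck])) :
    Complementary (mid ++ [ck - 1]) (mid ++ [ck - 1]) := by
  rcases Relation.ReflTransGen.cases_tail hC with heq | ⟨P, hrest, hstep⟩
  · -- C = [2]: impossible
    simp only [Prod.mk.injEq] at heq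
    rw [hdecomp] at heq
    simp at heq
  · rcases hstep with ⟨a, A', B', h1, h2⟩ | ⟨A', B', b, h1, h2⟩
    · -- last move type 1: head of C would be a+1 ≥ 3, but head is 2
      exfalso
      rw [h1] at hrest
      obtain ⟨x, t, hxt, hx⟩ := compl_head hrest
      simp only [List.cons.injEq] at hxt
      obtain ⟨rfl, rfl⟩ := hxt
      simp only [Prod.mk.injEq] at h2
      rw [hdecomp] at h2
      simp only [List.cons.injEq] at h2
      omega
    · -- last move type 2
      simp only [Prod.mk.injEq] at h2
      obtain ⟨hC1, hC2⟩ := h2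
      rw [hdecomp] at hC1 hC2
      simp only [List.cons.injEq] at hC1
      obtain ⟨-, rfl⟩ := hC1
      -- hC2 : 2 :: (mid ++ [ck]) = B' ++ [b + 1]
      have hC2' : (2 :: mid) ++ [ck] = B' ++ [b + 1] := by
        simpa using hC2
      obtain ⟨rfl, hck⟩ := List.append_inj' hC2' rfl
      have hbck : b = ck - 1 := by
        have : ck = b + 1 := by simpa using hck
        omega
      subst hbck
      rw [h1] at hrest
      -- hrest : Complementary (mid ++ [ck]) (2 :: (mid ++ [ck - 1]))
      have hrest' : Complementary (mid ++ [ck]) (2 :: (mid ++ [ck - 1])) := by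
        simpa [Complementary] using hrest
      obtain ⟨A₀, hc, hA⟩ := key hrest' (by simp)
      obtain ⟨hA₀ne, -⟩ := compl_ne hc
      rcases List.eq_nil_or_concat A₀ with rfl | ⟨L, ℓ, rfl⟩
      · exact absurd rfl hA₀ne
      · simp only [List.concat_eq_append] at hA hc
        rw [incLast_append] at hA
        obtain ⟨rfl, hℓ⟩ := List.append_inj' hA rfl
        have : ℓ = ck - 1 := by
          have : ck = ℓ + 1 := by simpa using hℓ
          omega
        subst this
        exact hc

/-- Let `C = (c₁,…,c_k)` be a self-complementary string with `k ≥ 2`.  Then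
`c₁ = 2` or `c_k = 2`; moreover, if `c₁ = 2` then `(c₂,…,c_k₋₁, c_k − 1)` is
self-complementary, and if `c_k = 2` then `(c₁ − 1, c₂,…,c_k₋₁)` is
self-complementary. -/
theorem stmt13 (C : List ℤ) (hlen : 2 ≤ C.length) (hC : Complementary C C) :
    (C.head? = some 2 ∨ C.getLast? = some 2) ∧
    (∀ (mid : List ℤ) (ck : ℤ), C = 2 :: (mid ++ [ck]) →
      Complementary (mid ++ [ck - 1]) (mid ++ [ck - 1])) ∧
    (∀ (c₁ : ℤ) (mid : List ℤ), C = (c₁ :: mid) ++ [2] →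
      Complementary ((c₁ - 1) :: mid) ((c₁ - 1) :: mid)) := by
  refine ⟨?_, fun mid ck h => concl2 hC mid ck h, ?_⟩
  · -- head or last is 2
    rcases Relation.ReflTransGen.cases_tail hC with heq | ⟨P, hrest, hstep⟩
    · simp only [Prod.mk.injEq] at heq
      rw [heq.1] at hlen
      simp at hlen
    · rcases hstep with ⟨a, A', B', h1, h2⟩ | ⟨A', B', b, h1, h2⟩
      · right
        simp only [Prod.mk.injEq] at h2
        rw [h2.2]
        simp
      · left
        simp only [Prod.mk.injEq] at h2
        rw [h2.1]
        simp
  · -- third conclusion via reversal symmetry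
    intro c₁ mid hdecomp
    have hrevC : Complementary C.reverse C.reverse := compl_rev hC
    have hrev_decomp : C.reverse = 2 :: (mid.reverse ++ [c₁]) := by
      rw [hdecomp]; simp
    have := concl2 hrevC mid.reverse c₁ hrev_decomp
    have h2 := compl_rev this
    simpa using h2
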